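/- Let U be a finite multiset of unit vectors in R^n, let 1 ≤ k ≤ n, and let 0 < ρ ≤ 1. Then (#U) ≤ C(n,k) [ ρ^{(1-k)/k} ( Σ_{u_1 ∈ U} ... Σ_{u_k ∈ U} |u_1 ∧ ... ∧ u_k| )^{1/k} + sup_{H ∈ Gr(k-1, R^n)} #{u ∈ U : |H ∧ u| ≤ ρ} ], where C(n,k) is a constant depending only on n and k. -/

import Mathlib

open Finset
open scoped Classical

open Matrix Module

/-- Square root of the Gram determinant: the unsigned volume of the parallelepiped
spanned by `w 0, …, w (k-1)`. -/
noncomputable def gramVol {n k : ℕ} (w : Fin k → EuclideanSpace ℝ (Fin n)) : ℝ :=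
  Real.sqrt (Matrix.det (Matrix.of fun i j : Fin k => (inner ℝ (w i) (w j) : ℝ)))

namespace GramAux

variable {n m : ℕ}

local notation "E" => EuclideanSpace ℝ (Fin n)

/-- The Gram matrix. -/
noncomputable def gram (w : Fin m → E) : Matrix (Fin m) (Fin m) ℝ :=
  Matrix.of fun i j : Fin m => (inner ℝ (w i) (w j) : ℝ)

lemma gramVol_eq (w : Fin m → E) : gramVol w = Real.sqrt (gram w).det := rfl

lemma gram_posSemidef (w : Fin m → E) : (gram w).PosSemidef := by
  let B : Matrix (Fin n) (Fin m) ℝ := Matrix.of fun x i => w i x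
  have : gram w = Bᴴ * B := by
    ext i j
    simp [B, gram, Matrix.mul_apply, Matrix.conjTranspose_apply, PiLp.inner_apply,
      RCLike.inner_apply, conj_trivial]
    exact Finset.sum_congr rfl fun _ _ => mul_comm _ _
  rw [this]
  exact Matrix.posSemidef_conjTranspose_mul_self _

lemma gram_det_nonneg (w : Fin m → E) : 0 ≤ (gram w).det := by
  have h := gram_posSemidef w
  rw [h.isHermitian.det_eq_prod_eigenvalues]
  exact Finset.prod_nonneg fun i _ => h.eigenvalues_nonneg i

lemma gramVol_nonneg (w : Fin m → E) : 0 ≤ gramVol w := Real.sqrt_nonneg _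

lemma gram_det_eq_zero (w : Fin m → E) (g : Fin m → ℝ) (hg : g ≠ 0)
    (hsum : ∑ i, g i • w i = 0) : (gram w).det = 0 := by
  rw [← Matrix.exists_mulVec_eq_zero_iff]
  refine ⟨g, hg, ?_⟩
  funext i
  have : (gram w).mulVec g i = inner ℝ (w i) (∑ j, g j • w j) := by
    simp only [gram, Matrix.mulVec, dotProduct, Matrix.of_apply]
    rw [inner_sum]
    simp_rw [real_inner_smul_right]
    exact Finset.sum_congr rfl fun j _ => mul_comm _ _
  simp only [Pi.zero_apply]
  rw [this, hsum, inner_zero_right]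


lemma gram_det_snoc (w : Fin m → E) (x : E) :
    (gram (Fin.snoc w x)).det =
      (gram (Fin.snoc w ((Submodule.orthogonalProjectionOnto (Submodule.span ℝ (Set.range w)) x : E)))).det
      + ‖x - (Submodule.orthogonalProjectionOnto (Submodule.span ℝ (Set.range w)) x : E)‖^2 * (gram w).det := by
  set W := Submodule.span ℝ (Set.range w) with hWdef
  set p : E := (Submodule.orthogonalProjectionOnto W x : E) with hp
  have hq : x - p ∈ Wᗮ := Submodule.sub_starProjection_mem_orthogonal x
  have hw : ∀ i, w i ∈ W := fun i => Submodule.subset_span ⟨i, rfl⟩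
  have hiq : ∀ i, (inner ℝ (w i) (x - p) : ℝ) = 0 := fun i =>
    (Submodule.mem_orthogonal W (x - p)).1 hq (w i) (hw i)
  have hxw : ∀ i, (inner ℝ (w i) x : ℝ) = inner ℝ (w i) p := by
    intro i
    have h := hiq i
    rw [inner_sub_right] at h
    linarith
  have hpx : ∀ i, (inner ℝ x (w i) : ℝ) = inner ℝ p (w i) := by
    intro i
    rw [real_inner_comm, hxw i, real_inner_comm]
  have hpmem : p ∈ W := (Submodule.orthogonalProjectionOnto W x).2
  have hxx : (inner ℝ x x : ℝ) = inner ℝ p p + ‖x - p‖^2 := by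
    have hpq : (inner ℝ p (x - p) : ℝ) = 0 :=
      Submodule.inner_right_of_mem_orthogonal hpmem hq
    have hxd : x = p + (x - p) := by abel
    calc (inner ℝ x x : ℝ) = inner ℝ (p + (x - p)) (p + (x - p)) := by rw [← hxd]
      _ = inner ℝ p p + 2 * inner ℝ p (x - p) + inner ℝ (x - p) (x - p) :=
          real_inner_add_add_self _ _
      _ = inner ℝ p p + ‖x - p‖^2 := by
          rw [hpq, real_inner_self_eq_norm_sq, real_inner_self_eq_norm_sq]
          ring
  have hAB : gram (Fin.snoc w x) = (gram (Fin.snoc w p)).updateCol (Fin.last m)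
      ((fun i => gram (Fin.snoc w p) i (Fin.last m)) +
        ‖x - p‖^2 • (Pi.single (Fin.last m) (1:ℝ) : Fin (m+1) → ℝ)) := by
    ext i j
    rcases eq_or_ne j (Fin.last m) with rfl | hj
    · rw [Matrix.updateCol_self]
      cases i using Fin.lastCases with
      | last =>
          simp only [gram, Matrix.of_apply, Fin.snoc_last, Pi.add_apply, Pi.smul_apply,
            Pi.single_eq_same, smul_eq_mul, mul_one]
          exact hxx
      | cast ii =>
          simp only [gram, Matrix.of_apply, Fin.snoc_last, Fin.snoc_castSucc, Pi.add_apply,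
            Pi.smul_apply, Pi.single_eq_of_ne (Fin.castSucc_lt_last ii).ne, smul_eq_mul,
            mul_zero, add_zero]
          exact hxw ii
    · rw [Matrix.updateCol_ne hj]
      obtain ⟨jj, rfl⟩ : ∃ jj : Fin m, j = jj.castSucc := ⟨j.castPred hj, by simp⟩
      cases i using Fin.lastCases with
      | last =>
          simp only [gram, Matrix.of_apply, Fin.snoc_last, Fin.snoc_castSucc]
          exact hpx jj
      | cast ii => simp only [gram, Matrix.of_apply, Fin.snoc_castSucc]
  have hminor : ((gram (Fin.snoc w p)).updateCol (Fin.last m)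
      (Pi.single (Fin.last m) (1:ℝ))).det = (gram w).det := by
    rw [Matrix.det_succ_column _ (Fin.last m)]
    rw [Finset.sum_eq_single (Fin.last m)]
    · have hsub : ((gram (Fin.snoc w p)).updateCol (Fin.last m)
          (Pi.single (Fin.last m) (1:ℝ))).submatrix
            (Fin.last m).succAbove (Fin.last m).succAbove = gram w := by
        ext i j
        simp [Matrix.submatrix_apply, Fin.succAbove_last, Matrix.updateCol_apply,
          (Fin.castSucc_lt_last j).ne, gram, Fin.snoc_castSucc]
      rw [hsub]
      rw [Matrix.updateCol_self]
      simp [Pi.single_eq_same, Even.neg_one_pow (Even.add_self m)]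
    · intro b _ hb
      rw [Matrix.updateCol_self]
      simp [Pi.single_eq_of_ne hb]
    · intro h
      exact absurd (Finset.mem_univ _) h
  rw [hAB, Matrix.det_updateCol_add, Matrix.updateCol_eq_self,
    Matrix.det_updateCol_smul, hminor]


lemma le_gramVol_snoc (w : Fin m → E) (x : E) :
    ‖x - (Submodule.orthogonalProjectionOnto (Submodule.span ℝ (Set.range w)) x : E)‖ * gramVol w ≤
      gramVol (Fin.snoc w x) := by
  rw [gramVol_eq, gramVol_eq, gram_det_snoc]
  set c := ‖x - (Submodule.orthogonalProjectionOnto (Submodule.span ℝ (Set.range w)) x : E)‖ with hc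
  have h1 : c ^ 2 * (gram w).det ≤
      (gram (Fin.snoc w ((Submodule.orthogonalProjectionOnto (Submodule.span ℝ (Set.range w)) x : E)))).det
        + c ^ 2 * (gram w).det :=
    le_add_of_nonneg_left (gram_det_nonneg _)
  have h2 : c * Real.sqrt (gram w).det = Real.sqrt (c ^ 2 * (gram w).det) := by
    rw [Real.sqrt_mul (sq_nonneg c), Real.sqrt_sq (norm_nonneg _)]
  rw [h2]
  exact Real.sqrt_le_sqrt h1

lemma gramVol_snoc_orthonormal (v : Fin m → E) (hv : Orthonormal ℝ v) (x : E) :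
    gramVol (Fin.snoc v x) =
      ‖x - (Submodule.orthogonalProjectionOnto (Submodule.span ℝ (Set.range v)) x : E)‖ := by
  rw [gramVol_eq, gram_det_snoc]
  set p : E := (Submodule.orthogonalProjectionOnto (Submodule.span ℝ (Set.range v)) x : E) with hp
  have h0 : (gram (Fin.snoc v p)).det = 0 := by
    have hpW : p ∈ Submodule.span ℝ (Set.range v) :=
      (Submodule.orthogonalProjectionOnto (Submodule.span ℝ (Set.range v)) x).2
    obtain ⟨c, hc⟩ := Submodule.mem_span_range_iff_exists_fun ℝ |>.1 hpW
    apply gram_det_eq_zero _ (Fin.snoc c (-1))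
    · intro h
      have := congrFun h (Fin.last m)
      simp [Fin.snoc_last] at this
    · rw [Fin.sum_univ_castSucc]
      simp only [Fin.snoc_castSucc, Fin.snoc_last, neg_smul, one_smul]
      rw [hc]
      simp
  have h1 : (gram v).det = 1 := by
    have : gram v = 1 := by
      ext i j
      rw [Matrix.one_apply]
      exact orthonormal_iff_ite.mp hv i j
    rw [this, Matrix.det_one]
  rw [h0, h1, zero_add, mul_one, Real.sqrt_sq (norm_nonneg _)]

lemma proj_mono {W W' : Submodule ℝ (EuclideanSpace ℝ (Fin n))} (h : W ≤ W') (x : E) :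
    ‖x - (Submodule.orthogonalProjectionOnto W' x : E)‖ ≤ ‖x - (Submodule.orthogonalProjectionOnto W x : E)‖ := by
  rw [show ‖x - (Submodule.orthogonalProjectionOnto W' x : E)‖ = ⨅ y : W', ‖x - (y : E)‖ from Submodule.starProjection_minimal x]
  have hbdd : BddBelow (Set.range fun y : W' => ‖x - (y : E)‖) := by
    refine ⟨0, ?_⟩
    rintro r ⟨y, rfl⟩
    positivity
  exact ciInf_le hbdd ⟨(Submodule.orthogonalProjectionOnto W x : E), h (Submodule.orthogonalProjectionOnto W x).2⟩

lemma exists_orthonormal_superset (hmn : m ≤ n) (W : Submodule ℝ (EuclideanSpace ℝ (Fin n)))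
    (hW : finrank ℝ W ≤ m) :
    ∃ v : Fin m → E, Orthonormal ℝ v ∧ W ≤ Submodule.span ℝ (Set.range v) := by
  set d := finrank ℝ W with hd
  have hdm : d ≤ m := hW
  let bW := stdOrthonormalBasis ℝ W
  let v0 : Fin n → E := fun i => if h : (i : ℕ) < d then (bW ⟨i, h⟩ : E) else 0
  set s : Set (Fin n) := {i | (i : ℕ) < d} with hs
  have hbWE : Orthonormal ℝ (fun i : Fin d => (bW i : E)) := by
    rw [orthonormal_iff_ite]
    intro i j
    rw [← Submodule.coe_inner]
    exact orthonormal_iff_ite.mp bW.orthonormal i j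
  have hres : Orthonormal ℝ (s.restrict v0) := by
    have : s.restrict v0 = (fun i : Fin d => (bW i : E)) ∘ (fun i : s => (⟨i.1, i.2⟩ : Fin d)) := by
      funext i
      exact dif_pos i.2
    rw [this]
    exact hbWE.comp _ (fun a b hab => Subtype.ext (Fin.ext (by simpa using congrArg Fin.val hab)))
  have hcard : finrank ℝ (EuclideanSpace ℝ (Fin n)) = Fintype.card (Fin n) := by simp
  obtain ⟨b, hb⟩ := hres.exists_orthonormalBasis_extension_of_card_eq hcard
  refine ⟨fun j => b (Fin.castLE hmn j), b.orthonormal.comp _ (Fin.castLE_injective hmn), ?_⟩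
  have hWspan : W = Submodule.span ℝ (Set.range fun i : Fin d => (bW i : E)) := by
    have h1 : (Set.range fun i : Fin d => (bW i : E)) = W.subtype '' Set.range bW := by
      rw [← Set.range_comp]; rfl
    rw [h1, ← Submodule.map_span, ← bW.coe_toBasis, bW.toBasis.span_eq, Submodule.map_subtype_top]
  rw [hWspan]
  apply Submodule.span_mono
  rintro _ ⟨i, rfl⟩
  refine ⟨⟨i.1, lt_of_lt_of_le i.2 hdm⟩, ?_⟩
  have hi : (Fin.castLE hmn ⟨i.1, lt_of_lt_of_le i.2 hdm⟩) ∈ s := i.2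
  show b (Fin.castLE hmn ⟨i.1, lt_of_lt_of_le i.2 hdm⟩) = ((bW i : E))
  rw [hb _ hi]
  show dite _ _ _ = _
  rw [dif_pos (show ((Fin.castLE hmn ⟨i.1, lt_of_lt_of_le i.2 hdm⟩ : Fin n) : ℕ) < d from i.2)]
  exact congrArg (fun t => ((bW t : E))) (Fin.ext rfl)

lemma gramVol_one (w : Fin 1 → E) : gramVol w = ‖w 0‖ := by
  rw [gramVol_eq]
  have : (gram w).det = ‖w 0‖ ^ 2 := by
    rw [Matrix.det_fin_one]
    show (inner ℝ (w 0) (w 0) : ℝ) = _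
    rw [real_inner_self_eq_norm_sq]
  rw [this, Real.sqrt_sq (norm_nonneg _)]


end GramAux

open GramAux

/-- Lemma 2.2, inequality (2.3) of the paper.  `M` plays the role of the supremum over the
Grassmannian `Gr(k-1, ℝⁿ)` of the number of `u ∈ U` with `|H ∧ u| ≤ ρ`: the hypothesis says
that `M` is an upper bound for the count for every `(k-1)`-dimensional subspace `H`
(specified by an orthonormal basis `v`). -/
theorem stmt_3 (n k : ℕ) (hk : 1 ≤ k) (hkn : k ≤ n) :
    ∃ C : ℝ, 0 < C ∧ ∀ (N : ℕ) (ρ : ℝ), 0 < ρ → ρ ≤ 1 →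
      ∀ u : Fin N → EuclideanSpace ℝ (Fin n), (∀ i, ‖u i‖ = 1) →
      ∀ M : ℝ,
        (∀ v : Fin (k - 1) → EuclideanSpace ℝ (Fin n), Orthonormal ℝ v →
          ((Finset.univ.filter fun i : Fin N =>
              gramVol (Fin.snoc v (u i)) ≤ ρ).card : ℝ) ≤ M) →
        (N : ℝ) ≤ C * (ρ ^ (((1 : ℝ) - k) / k) *
            (∑ f : Fin k → Fin N, gramVol (u ∘ f)) ^ ((1 : ℝ) / k) + M) := by
  refine ⟨2, by norm_num, ?_⟩
  intro N ρ hρ hρ1 u hu M hM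
  have hk1n : k - 1 ≤ n := le_trans (Nat.sub_le k 1) hkn
  obtain ⟨v₀, hv₀, -⟩ := exists_orthonormal_superset hk1n ⊥ (by simp)
  have hM0 : 0 ≤ M := le_trans (by positivity) (hM v₀ hv₀)
  set S := ∑ f : Fin k → Fin N, gramVol (u ∘ f) with hS
  have hS0 : 0 ≤ S := Finset.sum_nonneg fun f _ => gramVol_nonneg _
  have hterm : 0 ≤ ρ ^ (((1:ℝ) - k)/k) * S ^ ((1:ℝ)/k) :=
    mul_nonneg (Real.rpow_nonneg hρ.le _) (Real.rpow_nonneg hS0 _)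
  by_cases hMN : (N:ℝ)/2 ≤ M
  · linarith
  push_neg at hMN
  have hN0 : (0:ℝ) < N := by
    have : (0:ℝ) < (N:ℝ)/2 := lt_of_le_of_lt hM0 hMN
    linarith
  have hNM2 : (N:ℝ)/2 ≤ (N:ℝ) - M := by linarith
  have hqpos : (0:ℝ) < ρ * ((N:ℝ) - M) := by
    apply mul_pos hρ
    linarith
  -- key step
  have hstep : ∀ (j : ℕ), j ≤ k - 1 → ∀ f : Fin j → Fin N,
      ρ * ((N:ℝ) - M) * gramVol (u ∘ f) ≤ ∑ i : Fin N, gramVol (Fin.snoc (u ∘ f) (u i)) := by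
    intro j hj f
    set W := Submodule.span ℝ (Set.range (u ∘ f)) with hW
    have hWr : finrank ℝ W ≤ k - 1 :=
      calc finrank ℝ W = (Set.range (u ∘ f)).finrank ℝ := rfl
        _ ≤ Fintype.card (Fin j) := finrank_range_le_card _
        _ = j := Fintype.card_fin j
        _ ≤ k - 1 := hj
    obtain ⟨v, hv, hWv⟩ := exists_orthonormal_superset hk1n W hWr
    have hcard := hM v hv
    set bad := Finset.univ.filter (fun i : Fin N => gramVol (Fin.snoc v (u i)) ≤ ρ) with hbad
    set good := Finset.univ.filter (fun i : Fin N => ¬ (gramVol (Fin.snoc v (u i)) ≤ ρ)) with hgood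
    have hsplit : bad.card + good.card = N := by
      rw [hbad, hgood, Finset.card_filter_add_card_filter_not]
      simp
    have hgoodcard : (N:ℝ) - M ≤ (good.card : ℝ) := by
      have h2 : ((bad.card : ℝ) + (good.card : ℝ)) = (N : ℝ) := by exact_mod_cast hsplit
      linarith [hcard]
    have hlower : ∀ i ∈ good, ρ * gramVol (u ∘ f) ≤ gramVol (Fin.snoc (u ∘ f) (u i)) := by
      intro i hi
      have hgt : ρ < gramVol (Fin.snoc v (u i)) :=
        not_le.mp (Finset.mem_filter.mp hi).2
      rw [gramVol_snoc_orthonormal v hv (u i)] at hgt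
      have hdist : ρ ≤ ‖u i - (Submodule.orthogonalProjectionOnto W (u i) : EuclideanSpace ℝ (Fin n))‖ :=
        le_trans hgt.le (proj_mono hWv (u i))
      calc ρ * gramVol (u ∘ f)
          ≤ ‖u i - (Submodule.orthogonalProjectionOnto W (u i) : EuclideanSpace ℝ (Fin n))‖ * gramVol (u ∘ f) :=
            mul_le_mul_of_nonneg_right hdist (gramVol_nonneg _)
        _ ≤ gramVol (Fin.snoc (u ∘ f) (u i)) := le_gramVol_snoc _ _
    have h0 : 0 ≤ ρ * gramVol (u ∘ f) := mul_nonneg hρ.le (gramVol_nonneg _)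
    calc ρ * ((N:ℝ) - M) * gramVol (u ∘ f)
        ≤ (good.card : ℝ) * (ρ * gramVol (u ∘ f)) := by nlinarith [hgoodcard, h0]
      _ = ∑ _i ∈ good, ρ * gramVol (u ∘ f) := by rw [Finset.sum_const, nsmul_eq_mul]
      _ ≤ ∑ i ∈ good, gramVol (Fin.snoc (u ∘ f) (u i)) := Finset.sum_le_sum hlower
      _ ≤ ∑ i : Fin N, gramVol (Fin.snoc (u ∘ f) (u i)) :=
          Finset.sum_le_sum_of_subset_of_nonneg (Finset.subset_univ _)
            (fun i _ _ => gramVol_nonneg _)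
  -- induction on tuple length
  have hT : ∀ j : ℕ, 1 ≤ j → j ≤ k →
      (N:ℝ) * (ρ * ((N:ℝ) - M)) ^ (j - 1) ≤ ∑ f : Fin j → Fin N, gramVol (u ∘ f) := by
    intro j hj
    induction j, hj using Nat.le_induction with
    | base =>
        intro _
        have hone : ∀ f : Fin 1 → Fin N, gramVol (u ∘ f) = 1 := by
          intro f
          rw [gramVol_one]
          exact hu (f 0)
        rw [Finset.sum_congr rfl (fun f _ => hone f), Finset.sum_const, nsmul_eq_mul]
        simp
    | succ j hj ih =>
        intro hjk
        have hjk' : j ≤ k := le_trans (Nat.le_succ j) hjk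
        have hjk1 : j ≤ k - 1 := Nat.le_pred_of_lt (lt_of_lt_of_le (Nat.lt_succ_self j) hjk)
        have hIH := ih hjk'
        have hsum : ∑ f : Fin (j+1) → Fin N, gramVol (u ∘ f)
            = ∑ p : Fin N × (Fin j → Fin N), gramVol (Fin.snoc (u ∘ p.2) (u p.1)) := by
          rw [← Equiv.sum_comp (Fin.snocEquiv (fun _ => Fin N)) (fun f => gramVol (u ∘ f))]
          apply Finset.sum_congr rfl
          intro p _
          congr 1
          rw [show (Fin.snocEquiv (fun _ => Fin N)) p = Fin.snoc p.2 p.1 from rfl, Fin.comp_snoc]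
        rw [hsum, Fintype.sum_prod_type, Finset.sum_comm]
        have hge : ∀ f : Fin j → Fin N,
            ρ * ((N:ℝ) - M) * gramVol (u ∘ f) ≤ ∑ i : Fin N, gramVol (Fin.snoc (u ∘ f) (u i)) :=
          hstep j hjk1
        calc (N:ℝ) * (ρ * ((N:ℝ) - M)) ^ (j + 1 - 1)
            = (ρ * ((N:ℝ) - M)) * ((N:ℝ) * (ρ * ((N:ℝ) - M)) ^ (j - 1)) := by
              rw [show j + 1 - 1 = (j - 1) + 1 from by omega, pow_succ]
              ring
          _ ≤ (ρ * ((N:ℝ) - M)) * ∑ f : Fin j → Fin N, gramVol (u ∘ f) :=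
              mul_le_mul_of_nonneg_left hIH hqpos.le
          _ = ∑ f : Fin j → Fin N, ρ * ((N:ℝ) - M) * gramVol (u ∘ f) := by
              rw [Finset.mul_sum]
          _ ≤ ∑ f : Fin j → Fin N, ∑ i : Fin N, gramVol (Fin.snoc (u ∘ f) (u i)) :=
              Finset.sum_le_sum fun f _ => hge f
  have hSk := hT k hk le_rfl
  have hk0 : (k:ℝ) ≠ 0 := Nat.cast_ne_zero.2 (by omega)
  -- lower bound on S
  have hS1 : ((N:ℝ)/2)^k * ρ^(k-1) ≤ S := by
    have hkk : k - 1 + 1 = k := Nat.succ_pred_eq_of_pos hk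
    have hq' : ρ * ((N:ℝ)/2) ≤ ρ * ((N:ℝ) - M) := by nlinarith
    calc ((N:ℝ)/2)^k * ρ^(k-1) = ((N:ℝ)/2) * (ρ * ((N:ℝ)/2))^(k-1) := by
          rw [← hkk, pow_succ, mul_pow, Nat.add_sub_cancel]
          ring
      _ ≤ (N:ℝ) * (ρ * ((N:ℝ) - M))^(k-1) := by
          apply mul_le_mul (by linarith) (pow_le_pow_left₀ (by positivity) hq' _)
            (by positivity) (by positivity)
      _ ≤ S := hSk
  -- rpow arithmetic
  have hSpow : ((N:ℝ)/2) * ρ ^ (((k:ℝ)-1)/k) ≤ S ^ ((1:ℝ)/k) := by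
    have h1 : (((N:ℝ)/2)^k * ρ^(k-1)) ^ ((1:ℝ)/k) ≤ S ^ ((1:ℝ)/k) :=
      Real.rpow_le_rpow (by positivity) hS1 (by positivity)
    have h2 : (((N:ℝ)/2)^k * ρ^(k-1)) ^ ((1:ℝ)/k) = ((N:ℝ)/2) * ρ ^ (((k:ℝ)-1)/k) := by
      rw [Real.mul_rpow (by positivity) (by positivity)]
      rw [← Real.rpow_natCast ((N:ℝ)/2) k, ← Real.rpow_natCast ρ (k-1)]
      rw [← Real.rpow_mul (by positivity), ← Real.rpow_mul hρ.le]
      have hc1 : (k:ℝ) * ((1:ℝ)/k) = 1 := by field_simp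
      have hc2 : ((k-1 : ℕ) : ℝ) * ((1:ℝ)/k) = ((k:ℝ)-1)/k := by
        rw [Nat.cast_sub hk]
        ring
      rw [hc1, hc2, Real.rpow_one]
    rw [← h2]
    exact h1
  have hfinal : (N:ℝ)/2 ≤ ρ ^ (((1:ℝ)-k)/k) * S ^ ((1:ℝ)/k) := by
    have hρpos : (0:ℝ) < ρ ^ (((1:ℝ)-k)/k) := Real.rpow_pos_of_pos hρ _
    have h3 := mul_le_mul_of_nonneg_left hSpow hρpos.le
    have hcomb : ρ ^ (((1:ℝ)-k)/k) * (((N:ℝ)/2) * ρ ^ (((k:ℝ)-1)/k)) = (N:ℝ)/2 := by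
      rw [show ρ ^ (((1:ℝ)-k)/k) * (((N:ℝ)/2) * ρ ^ (((k:ℝ)-1)/k))
          = ((N:ℝ)/2) * (ρ ^ (((1:ℝ)-k)/k) * ρ ^ (((k:ℝ)-1)/k)) from by ring]
      rw [← Real.rpow_add hρ]
      rw [show ((1:ℝ)-k)/k + ((k:ℝ)-1)/k = 0 from by field_simp; ring]
      rw [Real.rpow_zero, mul_one]
    rw [hcomb] at h3
    exact h3
  linarith
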